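/- Assume the half-grid hypotheses for a 16-point set Z = Z_a ∪ Z_b ∪ Z_c ∪ Z_d on four pairwise skew lines R_a, R_b, R_c, R_d in ℙ³. Then there exist x ∈ {a,b,c,d} and a projective transformation ψ of the line R_x (induced by a linear automorphism of the corresponding 2-dimensional subspace of ℂ⁴) such that ψ maps the 4-point set Z_x onto itself, ψ ≠ id, and ψ ∘ ψ ≠ id (i.e., ψ has order at least 3). In particular the quadruple Z_x admits a non-involutive symmetry, so it is harmonic or anharmonic. -/

import Mathlib

open Projectivization
open scoped LinearAlgebra.Projectivization

set_option maxHeartbeats 1000000 in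
section
end

namespace HGAux

open Module Set Function

variable {V : Type*} [AddCommGroup V] [Module ℂ V] [FiniteDimensional ℂ V]


lemma rep_mem_submodule (p : ℙ ℂ V) : p.rep ∈ p.submodule := by
  rw [Projectivization.submodule_eq]
  exact Submodule.mem_span_singleton_self _

lemma not_le_both {W X : Submodule ℂ V} (h : W ⊓ X = ⊥) {p : ℙ ℂ V}
    (hW : p.submodule ≤ W) (hX : p.submodule ≤ X) : False := by
  have : p.rep ∈ W ⊓ X := ⟨hW (rep_mem_submodule p), hX (rep_mem_submodule p)⟩
  rw [h, Submodule.mem_bot] at this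
  exact p.rep_nonzero this

lemma mem_span_pair_of_line [FiniteDimensional ℂ V] {L : Submodule ℂ V}
    (hL : finrank ℂ L = 2) {u v w : V}
    (hind : ∀ s t : ℂ, s • u + t • v = 0 → s = 0 ∧ t = 0)
    (hu : u ∈ L) (hv : v ∈ L) (hw : w ∈ L) : ∃ c d : ℂ, w = c • u + d • v := by
  have hli : LinearIndependent ℂ ![u, v] := LinearIndependent.pair_iff.2 hind
  have hle : Submodule.span ℂ {u, v} ≤ L := by
    rw [Submodule.span_le]; rintro x (rfl | rfl) <;> assumption
  have hsp : Submodule.span ℂ {u, v} = L := by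
    apply Submodule.eq_of_le_of_finrank_le hle
    rw [hL]
    have : ({u, v} : Set V) = Set.range ![u, v] := by
      rw [Matrix.range_cons, Matrix.range_cons_empty]; rfl
    rw [this, finrank_span_eq_card hli, Fintype.card_fin]
  rw [← hsp] at hw
  obtain ⟨c, d, hcd⟩ := Submodule.mem_span_pair.1 hw
  exact ⟨c, d, hcd.symm⟩



lemma isCompl_of_skew (hV : finrank ℂ V = 4) {A B : Submodule ℂ V}
    (hA : finrank ℂ A = 2) (hB : finrank ℂ B = 2) (hAB : A ⊓ B = ⊥) : IsCompl A B := by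
  refine ⟨disjoint_iff.2 hAB, codisjoint_iff.2 ?_⟩
  apply Submodule.eq_top_of_finrank_eq
  have h2 := Submodule.finrank_sup_add_finrank_inf_eq A B
  rw [hAB, hA, hB, finrank_bot] at h2
  rw [hV]
  omega

lemma exists_graph {A B : Submodule ℂ V} (h : IsCompl A B) (hA2 : finrank ℂ A = 2)
    {C : Submodule ℂ V} (hC : finrank ℂ C = 2) (hCA : C ⊓ A = ⊥) (hCB : C ⊓ B = ⊥) :
    ∃ P : A →ₗ[ℂ] B, Function.Injective P ∧
      (∀ v ∈ C, Submodule.projectionOnto B A h.symm v =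
        P (Submodule.projectionOnto A B h v)) ∧
      (∀ a : A, (a : V) + (P a : V) ∈ C) := by
  set π := Submodule.projectionOnto A B h with hπ
  set π' := Submodule.projectionOnto B A h.symm with hπ'
  set e : C →ₗ[ℂ] A := π.comp C.subtype with he
  have hinj : Function.Injective e := by
    rw [← LinearMap.ker_eq_bot]
    rw [Submodule.eq_bot_iff]
    rintro ⟨x, hx⟩ hker
    have h0' : π x = 0 := hker
    have hxB : x ∈ B := (Submodule.projectionOnto_apply_eq_zero_iff h).1 h0'
    have : x ∈ C ⊓ B := ⟨hx, hxB⟩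
    rw [hCB, Submodule.mem_bot] at this
    exact Subtype.ext this
  have hsurj : Function.Surjective e :=
    (LinearMap.injective_iff_surjective_of_finrank_eq_finrank (hC.trans hA2.symm)).1 hinj
  set g : C ≃ₗ[ℂ] A := LinearEquiv.ofBijective e ⟨hinj, hsurj⟩ with hg
  set P : A →ₗ[ℂ] B := π'.comp (C.subtype.comp g.symm.toLinearMap) with hP
  have key : ∀ a : A, π ((g.symm a : C) : V) = a := by
    intro a
    have : e (g.symm a) = a := g.apply_symm_apply a
    exact this
  have hgraph : ∀ v ∈ C, π' v = P (π v) := by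
    intro v hv
    have h1 : g.symm (π v) = ⟨v, hv⟩ := by
      apply g.injective
      rw [g.apply_symm_apply]
      rfl
    show π' v = π' ((g.symm (π v) : C) : V)
    rw [h1]
  have hconv : ∀ a : A, (a : V) + (P a : V) ∈ C := by
    intro a
    have hdec : (π ((g.symm a : C) : V) : V) + (π' ((g.symm a : C) : V) : V)
        = ((g.symm a : C) : V) :=
      Submodule.projection_add_projection_eq_self h _
    have hP' : (P a : V) = (π' ((g.symm a : C) : V) : V) := rfl
    have hπa : π ((g.symm a : C) : V) = a := key a
    rw [hπa] at hdec
    rw [hP', hdec]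
    exact (g.symm a).2
  have hPinj : Function.Injective P := by
    rw [← LinearMap.ker_eq_bot, Submodule.eq_bot_iff]
    intro a ha
    have h0 : P a = 0 := ha
    have := hconv a
    rw [h0] at this
    simp only [Submodule.coe_zero, add_zero] at this
    have : (a : V) ∈ C ⊓ A := ⟨this, a.2⟩
    rw [hCA, Submodule.mem_bot] at this
    exact Subtype.ext this
  exact ⟨P, hPinj, hgraph, hconv⟩


-- core lemma for a line L meeting A, B, and a graph C = graph(P)
lemma core_ab {A B : Submodule ℂ V} (h : IsCompl A B) {C : Submodule ℂ V}
    (hCA : C ⊓ A = ⊥) (hCB : C ⊓ B = ⊥) (P : A →ₗ[ℂ] B)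
    (hgraph : ∀ v ∈ C, Submodule.projectionOnto B A h.symm v =
      P (Submodule.projectionOnto A B h v))
    {L : Submodule ℂ V} (hL : finrank ℂ L = 2)
    (p : ℙ ℂ A) (q r : ℙ ℂ V)
    (hjP : Function.Injective (B.subtype ∘ₗ P))
    (hj2 : Function.Injective (A.subtype + B.subtype ∘ₗ P))
    (hpL : (Projectivization.map A.subtype A.injective_subtype p).submodule ≤ L)
    (hqL : q.submodule ≤ L) (hqB : q.submodule ≤ B)
    (hrL : r.submodule ≤ L) (hrC : r.submodule ≤ C) :
    q = Projectivization.map (B.subtype ∘ₗ P) hjP p ∧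
      r = Projectivization.map (A.subtype + B.subtype ∘ₗ P) hj2 p := by
  set π := Submodule.projectionOnto A B h with hπdef
  set π' := Submodule.projectionOnto B A h.symm with hπ'def
  induction p using Projectivization.ind with
  | h a ha =>
  have haV : (a : V) ≠ 0 := fun h0 => ha (Subtype.ext h0)
  have haL : (a : V) ∈ L := by
    rw [Projectivization.map_mk, Projectivization.submodule_mk,
      Submodule.span_singleton_le_iff_mem] at hpL
    exact hpL
  set v := q.rep with hvdef
  have hv0 : v ≠ 0 := q.rep_nonzero
  have hvL : v ∈ L := hqL (rep_mem_submodule q)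
  have hvB : v ∈ B := hqB (rep_mem_submodule q)
  set w := r.rep with hwdef
  have hw0 : w ≠ 0 := r.rep_nonzero
  have hwL : w ∈ L := hrL (rep_mem_submodule r)
  have hwC : w ∈ C := hrC (rep_mem_submodule r)
  have hind : ∀ s t : ℂ, s • (a : V) + t • v = 0 → s = 0 ∧ t = 0 := by
    intro s t hst
    have h1 : s • (a : V) = -(t • v) := eq_neg_of_add_eq_zero_left hst
    have h2 : s • (a : V) ∈ A ⊓ B := by
      constructor
      · exact A.smul_mem s a.2
      · rw [h1]; exact B.neg_mem (B.smul_mem t hvB)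
    rw [h.inf_eq_bot, Submodule.mem_bot] at h2
    have hs : s = 0 := by
      rcases smul_eq_zero.1 h2 with hs | h0
      · exact hs
      · exact absurd h0 haV
    refine ⟨hs, ?_⟩
    rw [hs, zero_smul, zero_add] at hst
    rcases smul_eq_zero.1 hst with ht | h0
    · exact ht
    · exact absurd h0 hv0
  obtain ⟨c, d, hw⟩ := mem_span_pair_of_line hL hind haL hvL hwL
  have hπw : π w = c • a := by
    rw [hw, map_add, map_smul, map_smul]
    rw [Submodule.projectionOnto_apply_left h a,
      Submodule.projectionOnto_apply_of_mem_right h hvB]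
    simp
  have hπ'w : π' w = d • ⟨v, hvB⟩ := by
    rw [hw, map_add, map_smul, map_smul,
      Submodule.projectionOnto_apply_of_mem_right h.symm a.2,
      Submodule.projectionOnto_apply_left h.symm ⟨v, hvB⟩]
    simp
  have hkey : d • (⟨v, hvB⟩ : B) = c • P a := by
    rw [← hπ'w, hgraph w hwC, hπw, map_smul]
  have hc : c ≠ 0 := by
    intro hc0
    rw [hc0, zero_smul, zero_add] at hw
    have hmem : w ∈ C ⊓ B := ⟨hwC, by rw [hw]; exact B.smul_mem d hvB⟩
    rw [hCB, Submodule.mem_bot] at hmem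
    exact hw0 hmem
  have hd : d ≠ 0 := by
    intro hd0
    rw [hd0, zero_smul] at hπ'w
    have hwA : w ∈ A := (Submodule.projectionOnto_apply_eq_zero_iff h.symm).1 hπ'w
    have : w ∈ C ⊓ A := ⟨hwC, hwA⟩
    rw [hCA, Submodule.mem_bot] at this
    exact hw0 this
  have hkeyV : d • v = c • ((P a : B) : V) := congrArg Subtype.val hkey
  have hPa0 : ((B.subtype ∘ₗ P) a) ≠ 0 := by
    intro h0
    apply haV
    have : a = 0 := hjP (by simpa using h0)
    simp [this]
  have hveq : v = (d⁻¹ * c) • ((P a : B) : V) := by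
    rw [mul_smul]
    rw [← hkeyV, smul_smul, inv_mul_cancel₀ hd, one_smul]
  have hq : q = Projectivization.map (B.subtype ∘ₗ P) hjP (Projectivization.mk ℂ a ha) := by
    rw [Projectivization.map_mk, ← q.mk_rep]
    rw [Projectivization.mk_eq_mk_iff']
    exact ⟨d⁻¹ * c, hveq.symm⟩
  have hj2a0 : ((A.subtype + B.subtype ∘ₗ P) a) ≠ 0 := by
    intro h0
    apply haV
    have : a = 0 := hj2 (by simpa using h0)
    simp [this]
  have hweq : w = c • ((A.subtype + B.subtype ∘ₗ P) a) := by
    rw [hw, hveq, smul_smul, show d * (d⁻¹ * c) = c by field_simp]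
    simp only [LinearMap.add_apply, LinearMap.coe_comp, Function.comp_apply,
      Submodule.coe_subtype, smul_add]
  have hr : r = Projectivization.map (A.subtype + B.subtype ∘ₗ P) hj2
      (Projectivization.mk ℂ a ha) := by
    rw [Projectivization.map_mk, ← r.mk_rep]
    rw [Projectivization.mk_eq_mk_iff']
    exact ⟨c, hweq.symm⟩
  exact ⟨hq, hr⟩

-- core lemma for a line L meeting graph(P) (= C), B, and graph(Q) (= D)
lemma core_c {A B : Submodule ℂ V} (h : IsCompl A B) {C D : Submodule ℂ V}
    (hCB : C ⊓ B = ⊥) (hDA : D ⊓ A = ⊥) (hDB : D ⊓ B = ⊥)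
    (P Q : A →ₗ[ℂ] B)
    (hgC : ∀ a : A, (a : V) + (P a : V) ∈ C)
    (hgD : ∀ v ∈ D, Submodule.projectionOnto B A h.symm v =
      Q (Submodule.projectionOnto A B h v))
    {L : Submodule ℂ V} (hL : finrank ℂ L = 2)
    (p : ℙ ℂ A) (q r : ℙ ℂ V)
    (hj2 : Function.Injective (A.subtype + B.subtype ∘ₗ P))
    (hjQP : Function.Injective (B.subtype ∘ₗ (Q - P)))
    (hpL : (Projectivization.map (A.subtype + B.subtype ∘ₗ P) hj2 p).submodule ≤ L)
    (hqL : q.submodule ≤ L) (hqB : q.submodule ≤ B)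
    (hrL : r.submodule ≤ L) (hrD : r.submodule ≤ D) :
    q = Projectivization.map (B.subtype ∘ₗ (Q - P)) hjQP p := by
  set π := Submodule.projectionOnto A B h with hπdef
  set π' := Submodule.projectionOnto B A h.symm with hπ'def
  induction p using Projectivization.ind with
  | h a ha =>
  have haV : (a : V) ≠ 0 := fun h0 => ha (Subtype.ext h0)
  set u := (a : V) + (P a : V) with hudef
  have hu0 : u ≠ 0 := by
    intro h0
    apply haV
    have : a = 0 := hj2 (by simpa using h0)
    simp [this]
  have huL : u ∈ L := by
    rw [Projectivization.map_mk, Projectivization.submodule_mk,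
      Submodule.span_singleton_le_iff_mem] at hpL
    exact hpL
  have huC : u ∈ C := hgC a
  set v := q.rep with hvdef
  have hv0 : v ≠ 0 := q.rep_nonzero
  have hvL : v ∈ L := hqL (rep_mem_submodule q)
  have hvB : v ∈ B := hqB (rep_mem_submodule q)
  set w := r.rep with hwdef
  have hw0 : w ≠ 0 := r.rep_nonzero
  have hwL : w ∈ L := hrL (rep_mem_submodule r)
  have hwD : w ∈ D := hrD (rep_mem_submodule r)
  have hind : ∀ s t : ℂ, s • u + t • v = 0 → s = 0 ∧ t = 0 := by
    intro s t hst
    have h1 : s • (a : V) + (s • (P a : V) + t • v) = 0 := by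
      rw [← hst, hudef]; module
    have h2 : s • (a : V) = -(s • (P a : V) + t • v) := eq_neg_of_add_eq_zero_left h1
    have h3 : s • (a : V) ∈ A ⊓ B := by
      constructor
      · exact A.smul_mem s a.2
      · rw [h2]
        exact B.neg_mem (B.add_mem (B.smul_mem s (P a).2) (B.smul_mem t hvB))
    rw [h.inf_eq_bot, Submodule.mem_bot] at h3
    have hs : s = 0 := by
      rcases smul_eq_zero.1 h3 with hs | h0
      · exact hs
      · exact absurd h0 haV
    refine ⟨hs, ?_⟩
    rw [hs, zero_smul, zero_add] at hst
    rcases smul_eq_zero.1 hst with ht | h0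
    · exact ht
    · exact absurd h0 hv0
  obtain ⟨c, d, hw⟩ := mem_span_pair_of_line hL hind huL hvL hwL
  have hπu : π u = a := by
    rw [hudef, map_add, Submodule.projectionOnto_apply_left h a,
      Submodule.projectionOnto_apply_of_mem_right h (P a).2, add_zero]
  have hπ'u : π' u = P a := by
    rw [hudef, map_add, Submodule.projectionOnto_apply_of_mem_right h.symm a.2,
      Submodule.projectionOnto_apply_left h.symm (P a), zero_add]
  have hπw : π w = c • a := by
    rw [hw, map_add, map_smul, map_smul, hπu,
      Submodule.projectionOnto_apply_of_mem_right h hvB]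
    simp
  have hπ'w : π' w = c • P a + d • ⟨v, hvB⟩ := by
    rw [hw, map_add, map_smul, map_smul, hπ'u,
      Submodule.projectionOnto_apply_left h.symm ⟨v, hvB⟩]
  have hkey : d • (⟨v, hvB⟩ : B) = c • ((Q - P) a) := by
    have := hgD w hwD
    rw [hπ'w, hπw, map_smul] at this
    have h4 : d • (⟨v, hvB⟩ : B) = c • Q a - c • P a := by
      have h5 := sub_eq_of_eq_add' this.symm
      rw [← h5]
    rw [h4, LinearMap.sub_apply, smul_sub]
  have hc : c ≠ 0 := by
    intro hc0
    rw [hc0, zero_smul, zero_add] at hw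
    have hmem : w ∈ D ⊓ B := ⟨hwD, by rw [hw]; exact B.smul_mem d hvB⟩
    rw [hDB, Submodule.mem_bot] at hmem
    exact hw0 hmem
  have hd : d ≠ 0 := by
    intro hd0
    rw [hd0, zero_smul] at hkey
    have hQP : (Q - P) a = 0 := by
      rcases smul_eq_zero.1 hkey.symm with hc' | h0
      · exact absurd hc' hc
      · exact h0
    apply ha
    apply hjQP
    simp only [map_zero]
    simpa using congrArg (B.subtype) hQP
  have hkeyV : d • v = c • (((Q - P) a : B) : V) := congrArg Subtype.val hkey
  have hQPa0 : ((B.subtype ∘ₗ (Q - P)) a) ≠ 0 := by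
    intro h0
    apply haV
    have : a = 0 := hjQP (by simpa using h0)
    simp [this]
  have hveq : v = (d⁻¹ * c) • (((Q - P) a : B) : V) := by
    rw [mul_smul, ← hkeyV, smul_smul, inv_mul_cancel₀ hd, one_smul]
  rw [Projectivization.map_mk, ← q.mk_rep]
  rw [Projectivization.mk_eq_mk_iff']
  exact ⟨d⁻¹ * c, hveq.symm⟩




lemma j2_injective {A B : Submodule ℂ V} (hAB : A ⊓ B = ⊥) (P : ↥A →ₗ[ℂ] ↥B) :
    Function.Injective (A.subtype + B.subtype ∘ₗ P) := by
  rw [← LinearMap.ker_eq_bot, Submodule.eq_bot_iff]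
  intro a hk
  have h0 : (a : V) + (P a : V) = 0 := hk
  have h1 : (a : V) = -(P a : V) := eq_neg_of_add_eq_zero_left h0
  have hm : (a : V) ∈ A ⊓ B := ⟨a.2, by rw [h1]; exact B.neg_mem (P a).2⟩
  rw [hAB, Submodule.mem_bot] at hm
  exact Subtype.ext hm

lemma sub_graph_injective {A B : Submodule ℂ V} (hAB : A ⊓ B = ⊥)
    {C D : Submodule ℂ V} (hCD : C ⊓ D = ⊥) (P Q : ↥A →ₗ[ℂ] ↥B)
    (hgC : ∀ a : ↥A, (a : V) + (P a : V) ∈ C) (hgD : ∀ a : ↥A, (a : V) + (Q a : V) ∈ D) :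
    Function.Injective (B.subtype ∘ₗ (Q - P)) := by
  rw [← LinearMap.ker_eq_bot, Submodule.eq_bot_iff]
  intro a hk
  have h0 : ((Q - P) a : V) = 0 := hk
  have hPQ : (Q a : V) = (P a : V) := by
    have h1 : (Q a : V) - (P a : V) = 0 := by
      have : ((Q - P) a : V) = (Q a : V) - (P a : V) := by
        rw [LinearMap.sub_apply]; rfl
      rw [← this, h0]
    exact sub_eq_zero.1 h1
  have hv : (a : V) + (P a : V) ∈ C ⊓ D := by
    refine ⟨hgC a, ?_⟩
    rw [← hPQ]
    exact hgD a
  rw [hCD, Submodule.mem_bot] at hv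
  have hinj := j2_injective hAB P
  have : (A.subtype + B.subtype ∘ₗ P) a = (A.subtype + B.subtype ∘ₗ P) 0 := by
    simpa using hv
  exact hinj this

lemma exists_preimage {A : Submodule ℂ V} {q : ℙ ℂ V} (hq : q.submodule ≤ A) :
    ∃ p : ℙ ℂ ↥A, Projectivization.map A.subtype A.injective_subtype p = q := by
  have hrep : q.rep ∈ A := hq (rep_mem_submodule q)
  refine ⟨Projectivization.mk ℂ (⟨q.rep, hrep⟩ : A)
    (fun h0 => q.rep_nonzero (congrArg Subtype.val h0)), ?_⟩
  rw [Projectivization.map_mk]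
  exact q.mk_rep

lemma map_le_of_range_le {A : Submodule ℂ V} (j : ↥A →ₗ[ℂ] V) (hj : Function.Injective j)
    (W : Submodule ℂ V) (hr : ∀ a, j a ∈ W) (p : ℙ ℂ ↥A) :
    (Projectivization.map j hj p).submodule ≤ W := by
  induction p using Projectivization.ind with
  | h a ha =>
    rw [Projectivization.map_mk, Projectivization.submodule_mk,
      Submodule.span_singleton_le_iff_mem]
    exact hr a

lemma scalar_of_all_eigen {A : Submodule ℂ V} (hA2 : finrank ℂ ↥A = 2)
    (g : ↥A →ₗ[ℂ] ↥A) (h : ∀ a : ↥A, a ≠ 0 → ∃ c : ℂ, g a = c • a) :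
    ∃ c : ℂ, g = c • LinearMap.id := by
  have b : Basis (Fin 2) ℂ ↥A := finBasisOfFinrankEq ℂ ↥A hA2
  have hli := b.linearIndependent
  have hb0 : b 0 ≠ 0 := b.ne_zero 0
  have hb1 : b 1 ≠ 0 := b.ne_zero 1
  have hb01 : b 0 + b 1 ≠ 0 := by
    intro hsum
    have h1 : b 1 = -(b 0) := by
      have := eq_neg_of_add_eq_zero_right hsum
      exact this
    have : ¬ LinearIndependent ℂ b := by
      rw [Fintype.linearIndependent_iff]
      push_neg
      refine ⟨![1, 1], ?_, 0, by norm_num⟩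
      rw [Fin.sum_univ_two]
      simp [hsum]
    exact this hli
  obtain ⟨c0, hc0⟩ := h (b 0) hb0
  obtain ⟨c1, hc1⟩ := h (b 1) hb1
  obtain ⟨c2, hc2⟩ := h (b 0 + b 1) hb01
  have hrel : (c0 - c2) • b 0 + (c1 - c2) • b 1 = 0 := by
    have : c0 • b 0 + c1 • b 1 = c2 • b 0 + c2 • b 1 := by
      rw [← hc0, ← hc1, ← map_add g, hc2, smul_add]
    rw [sub_smul, sub_smul]
    rw [show (c0 • b 0 - c2 • b 0) + (c1 • b 1 - c2 • b 1)
      = (c0 • b 0 + c1 • b 1) - (c2 • b 0 + c2 • b 1) by abel, this, sub_self]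
  have hcc : c0 - c2 = 0 ∧ c1 - c2 = 0 := by
    have := Fintype.linearIndependent_iff.1 hli ![c0 - c2, c1 - c2] ?_
    · exact ⟨this 0, this 1⟩
    · rw [Fin.sum_univ_two]
      simpa using hrel
  have hc02 : c0 = c2 := sub_eq_zero.1 hcc.1
  have hc12 : c1 = c2 := sub_eq_zero.1 hcc.2
  refine ⟨c0, ?_⟩
  apply b.ext
  intro i
  fin_cases i
  · simpa using hc0
  · rw [show c1 = c0 by rw [hc02, hc12]] at hc1
    simpa using hc1

lemma map_ne_id {A : Submodule ℂ V} (hA2 : finrank ℂ ↥A = 2) (g : ↥A →ₗ[ℂ] ↥A)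
    (hg : Function.Injective g) (hns : ¬ ∃ c : ℂ, g = c • LinearMap.id) :
    Projectivization.map g hg ≠ id := by
  intro hid
  apply hns
  apply scalar_of_all_eigen hA2 g
  intro a ha
  have h1 : Projectivization.map g hg (Projectivization.mk ℂ a ha)
      = Projectivization.mk ℂ a ha := by rw [hid]; rfl
  rw [Projectivization.map_mk, Projectivization.mk_eq_mk_iff'] at h1
  obtain ⟨c, hc⟩ := h1
  exact ⟨c, hc.symm⟩

lemma sq_nonscalar {A : Submodule ℂ V} (hA2 : finrank ℂ ↥A = 2) (g : ↥A →ₗ[ℂ] ↥A)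
    (hns : ¬ ∃ c : ℂ, g = c • LinearMap.id) (htr : LinearMap.trace ℂ ↥A g ≠ 0) :
    ¬ ∃ c : ℂ, g ∘ₗ g = c • LinearMap.id := by
  rintro ⟨c, hc⟩
  let b : Basis (Fin 2) ℂ ↥A := finBasisOfFinrankEq ℂ ↥A hA2
  set G := LinearMap.toMatrix b b g with hG
  have hGG : G * G = c • 1 := by
    rw [hG, ← LinearMap.toMatrix_comp b b b, hc, map_smul, LinearMap.toMatrix_id]
  have htrG : Matrix.trace G ≠ 0 := by
    rw [hG, ← LinearMap.trace_eq_matrix_trace]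
    exact htr
  have htr2 : G 0 0 + G 1 1 ≠ 0 := by
    rw [← Matrix.trace_fin_two]
    exact htrG
  have hent : ∀ i j, (G * G) i j = (c • (1 : Matrix (Fin 2) (Fin 2) ℂ)) i j := by
    intro i j; rw [hGG]
  have e01 : G 0 1 * (G 0 0 + G 1 1) = 0 := by
    have := hent 0 1
    rw [Matrix.mul_apply, Fin.sum_univ_two] at this
    simp only [Matrix.smul_apply, Matrix.one_apply_ne (by norm_num : (0 : Fin 2) ≠ 1),
      smul_zero] at this
    linear_combination this
  have e10 : G 1 0 * (G 0 0 + G 1 1) = 0 := by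
    have := hent 1 0
    rw [Matrix.mul_apply, Fin.sum_univ_two] at this
    simp only [Matrix.smul_apply, Matrix.one_apply_ne (by norm_num : (1 : Fin 2) ≠ 0),
      smul_zero] at this
    linear_combination this
  have hq0 : G 0 1 = 0 := by
    rcases mul_eq_zero.1 e01 with h' | h'
    · exact h'
    · exact absurd h' htr2
  have hr0 : G 1 0 = 0 := by
    rcases mul_eq_zero.1 e10 with h' | h'
    · exact h'
    · exact absurd h' htr2
  have e00 : G 0 0 * G 0 0 + G 0 1 * G 1 0 = c := by
    have := hent 0 0
    rw [Matrix.mul_apply, Fin.sum_univ_two] at this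
    simpa using this
  have e11 : G 1 0 * G 0 1 + G 1 1 * G 1 1 = c := by
    have := hent 1 1
    rw [Matrix.mul_apply, Fin.sum_univ_two] at this
    simpa using this
  have hps : G 0 0 = G 1 1 := by
    have h1 : G 0 0 * G 0 0 = G 1 1 * G 1 1 := by
      rw [hq0] at e00
      rw [hr0] at e11
      simp only [mul_zero, zero_mul, add_zero, zero_add] at e00 e11
      rw [e00, e11]
    have h2 : (G 0 0 - G 1 1) * (G 0 0 + G 1 1) = 0 := by ring_nf; linear_combination h1
    rcases mul_eq_zero.1 h2 with h' | h'
    · exact sub_eq_zero.1 h'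
    · exact absurd h' htr2
  apply hns
  refine ⟨G 0 0, ?_⟩
  apply (LinearMap.toMatrix b b).injective
  rw [map_smul, LinearMap.toMatrix_id, ← hG]
  ext i j
  fin_cases i <;> fin_cases j <;>
    simp [Matrix.smul_apply, Matrix.one_apply, hq0, hr0, hps]



lemma exists_preimage_graph {A B : Submodule ℂ V} (h : IsCompl A B)
    (P : ↥A →ₗ[ℂ] ↥B) {C : Submodule ℂ V}
    (hgC : ∀ v ∈ C, Submodule.projectionOnto B A h.symm v =
      P (Submodule.projectionOnto A B h v))
    (hCB : C ⊓ B = ⊥)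
    (hj2 : Function.Injective (A.subtype + B.subtype ∘ₗ P))
    {q : ℙ ℂ V} (hq : q.submodule ≤ C) :
    ∃ p : ℙ ℂ ↥A, Projectivization.map (A.subtype + B.subtype ∘ₗ P) hj2 p = q := by
  have hwC : q.rep ∈ C := hq (rep_mem_submodule q)
  set a := Submodule.projectionOnto A B h q.rep with hadef
  have ha : a ≠ 0 := by
    intro h0
    have hwB : q.rep ∈ B := (Submodule.projectionOnto_apply_eq_zero_iff h).1 h0
    have hm : q.rep ∈ C ⊓ B := ⟨hwC, hwB⟩
    rw [hCB, Submodule.mem_bot] at hm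
    exact q.rep_nonzero hm
  have hvec : ((A.subtype + B.subtype ∘ₗ P) a) = q.rep := by
    have hdec : (a : V) + ((Submodule.projectionOnto B A h.symm q.rep : B) : V)
        = q.rep := Submodule.projection_add_projection_eq_self h q.rep
    have hg := hgC q.rep hwC
    show (a : V) + (P a : V) = q.rep
    rw [← hg, hdec]
  refine ⟨Projectivization.mk ℂ a ha, ?_⟩
  rw [Projectivization.map_mk, ← q.mk_rep]
  apply (Projectivization.mk_eq_mk_iff' ℂ _ _ _ _).2
  refine ⟨1, ?_⟩
  rw [one_smul]
  exact hvec.symm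


lemma quadric_case {A B : Submodule ℂ V} (h : IsCompl A B) (hA2 : finrank ℂ ↥A = 2)
    (N M : ↥A →ₗ[ℂ] ↥B) (N' : ↥B →ₗ[ℂ] ↥A) (hN' : ∀ a, N' (N a) = a)
    {C D : Submodule ℂ V}
    (hgC : ∀ v ∈ C, Submodule.projectionOnto B A h.symm v =
      N (Submodule.projectionOnto A B h v))
    (hgD : ∀ v ∈ D, Submodule.projectionOnto B A h.symm v =
      M (Submodule.projectionOnto A B h v))
    (c : ℂ) (hMN : ∀ a, M a = c • N a) :
    ∃ q : QuadraticForm ℂ V, q ≠ 0 ∧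
      ∀ v : V, (v ∈ A ∨ v ∈ B ∨ v ∈ C ∨ v ∈ D) → q v = 0 := by
  set π := Submodule.projectionOnto A B h with hπdef
  set π' := Submodule.projectionOnto B A h.symm with hπ'def
  let b : Basis (Fin 2) ℂ ↥A := finBasisOfFinrankEq ℂ ↥A hA2
  let ω : ↥A →ₗ[ℂ] ↥A →ₗ[ℂ] ℂ := LinearMap.mk₂ ℂ
    (fun a a' => b.coord 0 a * b.coord 1 a' - b.coord 1 a * b.coord 0 a')
    (by intros; simp; ring) (by intros; simp; ring)
    (by intros; simp; ring) (by intros; simp; ring)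
  have hωself : ∀ a : ↥A, ω a a = 0 := by
    intro a; simp only [ω, LinearMap.mk₂_apply]; ring
  have hωval : ω (b 0) (b 1) = 1 := by
    simp [ω, Basis.coord_apply, Basis.repr_self]
  let Φ : V →ₗ[ℂ] V →ₗ[ℂ] ℂ := LinearMap.mk₂ ℂ
    (fun v w => ω (π v) (N' (π' w)))
    (by intros; simp [map_add]) (by intros; simp [map_smul])
    (by intros; simp [map_add]) (by intros; simp [map_smul])
  refine ⟨(LinearMap.BilinMap.toQuadraticMap Φ), ?_, ?_⟩
  · intro h0
    have hv0 : (LinearMap.BilinMap.toQuadraticMap Φ) ((b 0 : V) + (N (b 1) : V)) = 0 := by rw [h0]; rfl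
    rw [LinearMap.BilinMap.toQuadraticMap_apply] at hv0
    have hπv : π ((b 0 : V) + (N (b 1) : V)) = b 0 := by
      rw [map_add, Submodule.projectionOnto_apply_left h,
        Submodule.projectionOnto_apply_of_mem_right h (N (b 1)).2, add_zero]
    have hπ'v : π' ((b 0 : V) + (N (b 1) : V)) = N (b 1) := by
      rw [map_add, Submodule.projectionOnto_apply_of_mem_right h.symm (b 0).2,
        Submodule.projectionOnto_apply_left h.symm, zero_add]
    rw [LinearMap.mk₂_apply, hπv, hπ'v, hN', hωval] at hv0
    exact one_ne_zero hv0
  · intro v hv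
    rw [LinearMap.BilinMap.toQuadraticMap_apply, LinearMap.mk₂_apply]
    rcases hv with hv | hv | hv | hv
    · rw [Submodule.projectionOnto_apply_of_mem_right h.symm hv]
      simp
    · rw [Submodule.projectionOnto_apply_eq_zero_iff h |>.2 hv]
      simp
    · rw [hgC v hv, hN']
      exact hωself _
    · rw [hgD v hv, hMN, map_smul, hN']
      rw [map_smul (ω (π v)) c (π v), hωself]
      simp
end HGAux

/-- The half-grid hypotheses for a 16-point set `Z = Z 0 ∪ Z 1 ∪ Z 2 ∪ Z 3` distributed
evenly on four pairwise skew lines `R 0, …, R 3` in `ℙ³` (lines are given by their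
2-dimensional subspaces of `ℂ⁴`):
* each `Z x` consists of 4 distinct points of the line `ℙ(R x)`;
* no nonzero homogeneous quadratic form on `ℂ⁴` vanishes at all points of `Z`;
* for each `x`, the 12 points `Z ∖ Z x` form a (3,4)-grid with respect to the remaining
  three lines: there are four pairwise skew lines `ℓ 0, …, ℓ 3`, each meeting each line
  `ℙ(R y)` (`y ≠ x`) in exactly one point, the 12 intersection points being exactly
  `Z ∖ Z x`. -/
structure HalfGridHyp (R : Fin 4 → Submodule ℂ (Fin 4 → ℂ))
    (Z : Fin 4 → Set (ℙ ℂ (Fin 4 → ℂ))) : Prop where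
  finrank_eq : ∀ x, Module.finrank ℂ (R x) = 2
  skew : ∀ x y, x ≠ y → R x ⊓ R y = ⊥
  ncard_eq : ∀ x, (Z x).ncard = 4
  mem_line : ∀ x, ∀ p ∈ Z x, p.submodule ≤ R x
  no_quadric : ¬ ∃ q : QuadraticForm ℂ (Fin 4 → ℂ), q ≠ 0 ∧
    ∀ x, ∀ p ∈ Z x, ∀ v ∈ Projectivization.submodule p, q v = 0
  grid : ∀ x : Fin 4, ∃ ℓ : Fin 4 → Submodule ℂ (Fin 4 → ℂ),
    (∀ i, Module.finrank ℂ (ℓ i) = 2) ∧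
    (∀ i j, i ≠ j → ℓ i ⊓ ℓ j = ⊥) ∧
    (∀ i, ∀ y, y ≠ x → ∃! p : ℙ ℂ (Fin 4 → ℂ),
      p.submodule ≤ ℓ i ∧ p.submodule ≤ R y) ∧
    {p : ℙ ℂ (Fin 4 → ℂ) | ∃ i y, y ≠ x ∧ p.submodule ≤ ℓ i ∧ p.submodule ≤ R y}
      = (⋃ y, Z y) \ Z x


namespace HGAux

open Module Set Function

lemma mem_Z_unique {R : Fin 4 → Submodule ℂ (Fin 4 → ℂ)} {Z : Fin 4 → Set (ℙ ℂ (Fin 4 → ℂ))}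
    (hyp : HalfGridHyp R Z) {p : ℙ ℂ (Fin 4 → ℂ)} {y y' : Fin 4}
    (h : p ∈ Z y) (h' : p ∈ Z y') : y = y' := by
  by_contra hne
  exact not_le_both (hyp.skew y y' hne) (hyp.mem_line y p h) (hyp.mem_line y' p h')

lemma gridRel {R : Fin 4 → Submodule ℂ (Fin 4 → ℂ)} {Z : Fin 4 → Set (ℙ ℂ (Fin 4 → ℂ))}
    (hyp : HalfGridHyp R Z) {x y : Fin 4} (hxy : y ≠ x) {pt : ℙ ℂ (Fin 4 → ℂ)}
    (hpt : pt ∈ Z y) :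
    ∃ L : Submodule ℂ (Fin 4 → ℂ), Module.finrank ℂ L = 2 ∧ pt.submodule ≤ L ∧
      ∀ z, z ≠ x → z ≠ y → ∃ q ∈ Z z, q.submodule ≤ L ∧ q.submodule ≤ R z := by
  obtain ⟨ℓ, hfr, hsk, huniq, hset⟩ := hyp.grid x
  have hptd : pt ∈ (⋃ y, Z y) \ Z x := by
    refine ⟨Set.mem_iUnion.2 ⟨y, hpt⟩, fun hx => ?_⟩
    exact hxy (mem_Z_unique hyp hpt hx)
  rw [← hset] at hptd
  obtain ⟨i, y', hy', hL1, hL2⟩ := hptd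
  refine ⟨ℓ i, hfr i, hL1, ?_⟩
  intro z hzx hzy
  obtain ⟨q, ⟨hq1, hq2⟩, -⟩ := huniq i z hzx
  have hqmem : q ∈ (⋃ y, Z y) \ Z x := by
    rw [← hset]; exact ⟨i, z, hzx, hq1, hq2⟩
  obtain ⟨z', hz'⟩ := Set.mem_iUnion.1 hqmem.1
  have hz'z : z' = z := by
    by_contra hne
    exact not_le_both (hyp.skew z' z hne) (hyp.mem_line z' q hz') hq2
  exact ⟨q, hz'z ▸ hz', hq1, hq2⟩

end HGAux

/-- Under the half-grid hypotheses for a 16-point set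
`Z = Z 0 ∪ Z 1 ∪ Z 2 ∪ Z 3` on four pairwise skew lines `R 0, …, R 3`, there are an index
`x` and a projective transformation `ψ` of the line `R x` (induced by a linear
automorphism of the corresponding 2-dimensional subspace of `ℂ⁴`) mapping the 4-point set
`Z x` onto itself with `ψ ≠ id` and `ψ ∘ ψ ≠ id` (so `ψ` has order at least 3); in
particular the quadruple `Z x` admits a non-involutive symmetry, hence is harmonic or
anharmonic.  Points of `ℙ³` on the line are identified with points of `ℙ(R x)` via the map
`ι` induced by the inclusion `R x ↪ ℂ⁴`. -/
theorem exists_non_involutive_symmetry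
    (R : Fin 4 → Submodule ℂ (Fin 4 → ℂ)) (Z : Fin 4 → Set (ℙ ℂ (Fin 4 → ℂ)))
    (hyp : HalfGridHyp R Z) :
    ∃ (x : Fin 4) (f : (R x) ≃ₗ[ℂ] (R x)),
      (fun ψ ι =>
        ψ '' (ι ⁻¹' Z x) = ι ⁻¹' Z x ∧ ψ ≠ id ∧ ψ ∘ ψ ≠ id)
      (Projectivization.map f.toLinearMap f.injective)
      (Projectivization.map (R x).subtype (R x).injective_subtype) := by
  classical
  open HGAux in
  have hdim4 : Module.finrank ℂ (Fin 4 → ℂ) = 4 := by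
    simp [Module.finrank_fin_fun]
  -- A = R 0, B = R 1 are complementary
  have h01 : IsCompl (R 0) (R 1) :=
    isCompl_of_skew hdim4 (hyp.finrank_eq 0) (hyp.finrank_eq 1) (hyp.skew 0 1 (by decide))
  -- graph maps for R 2 and R 3
  obtain ⟨N, hNinj, hNgraph, hNconv⟩ :=
    exists_graph h01 (hyp.finrank_eq 0) (hyp.finrank_eq 2)
      (hyp.skew 2 0 (by decide)) (hyp.skew 2 1 (by decide))
  obtain ⟨M, hMinj, hMgraph, hMconv⟩ :=
    exists_graph h01 (hyp.finrank_eq 0) (hyp.finrank_eq 3)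
      (hyp.skew 3 0 (by decide)) (hyp.skew 3 1 (by decide))
  -- injectivity of the associated maps into the ambient space
  have hjN : Function.Injective ((R 1).subtype ∘ₗ N) := by
    rw [LinearMap.coe_comp]
    exact (R 1).injective_subtype.comp hNinj
  have hjM : Function.Injective ((R 1).subtype ∘ₗ M) := by
    rw [LinearMap.coe_comp]
    exact (R 1).injective_subtype.comp hMinj
  have hj2 : Function.Injective ((R 0).subtype + (R 1).subtype ∘ₗ N) :=
    j2_injective (hyp.skew 0 1 (by decide)) N
  have hjMN : Function.Injective ((R 1).subtype ∘ₗ (M - N)) :=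
    sub_graph_injective (hyp.skew 0 1 (by decide)) (hyp.skew 2 3 (by decide)) N M
      hNconv hMconv
  -- N, M as linear equivalences
  have hNsurj : Function.Surjective N :=
    (LinearMap.injective_iff_surjective_of_finrank_eq_finrank
      (by rw [hyp.finrank_eq 0, hyp.finrank_eq 1])).1 hNinj
  have hMsurj : Function.Surjective M :=
    (LinearMap.injective_iff_surjective_of_finrank_eq_finrank
      (by rw [hyp.finrank_eq 0, hyp.finrank_eq 1])).1 hMinj
  set Ne : (R 0) ≃ₗ[ℂ] (R 1) := LinearEquiv.ofBijective N ⟨hNinj, hNsurj⟩ with hNe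
  set Me : (R 0) ≃ₗ[ℂ] (R 1) := LinearEquiv.ofBijective M ⟨hMinj, hMsurj⟩ with hMe
  set f : (R 0) ≃ₗ[ℂ] (R 0) := Me.trans Ne.symm with hf
  have hNf : ∀ a : (R 0), N (f a) = M a := by
    intro a
    show Ne (Ne.symm (Me a)) = M a
    rw [Ne.apply_symm_apply]
    rfl
  -- the linear map f - 1
  set fl2 : (R 0) →ₗ[ℂ] (R 0) := f.toLinearMap - LinearMap.id with hfl2
  have hNfl2 : ∀ a : (R 0), N (fl2 a) = (M - N) a := by
    intro a
    have : fl2 a = f a - a := rfl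
    rw [this, map_sub, hNf, LinearMap.sub_apply]
  have hfl2inj : Function.Injective fl2 := by
    intro a b hab
    apply hjMN
    show ((R 1).subtype) ((M - N) a) = ((R 1).subtype) ((M - N) b)
    rw [← hNfl2, ← hNfl2, hab]
  have hfl2surj : Function.Surjective fl2 :=
    (LinearMap.injective_iff_surjective_of_finrank_eq_finrank rfl).1 hfl2inj
  set F2 : (R 0) ≃ₗ[ℂ] (R 0) := LinearEquiv.ofBijective fl2 ⟨hfl2inj, hfl2surj⟩ with hF2
  -- the projective maps
  set mapι := Projectivization.map (R 0).subtype (R 0).injective_subtype with hmapι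
  set mapθN := Projectivization.map ((R 1).subtype ∘ₗ N) hjN with hmapθN
  set mapθM := Projectivization.map ((R 1).subtype ∘ₗ M) hjM with hmapθM
  set mapθ2 := Projectivization.map ((R 0).subtype + (R 1).subtype ∘ₗ N) hj2 with hmapθ2
  set mapθMN := Projectivization.map ((R 1).subtype ∘ₗ (M - N)) hjMN with hmapθMN
  have hθN_le : ∀ p, (mapθN p).submodule ≤ R 1 :=
    map_le_of_range_le _ _ _ (fun a => (N a).2)
  have hθ2_le : ∀ p, (mapθ2 p).submodule ≤ R 2 :=
    map_le_of_range_le _ _ _ (fun a => by simpa using hNconv a)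
  have hθMN_le : ∀ p, (mapθMN p).submodule ≤ R 1 :=
    map_le_of_range_le _ _ _ (fun a => ((M - N) a).2)
  -- composition identities
  have hcomp1 : ∀ p, mapθN (Projectivization.map f.toLinearMap f.injective p) = mapθM p := by
    intro p
    induction p using Projectivization.ind with
    | h a ha =>
      rw [Projectivization.map_mk, hmapθN, hmapθM, Projectivization.map_mk,
        Projectivization.map_mk]
      apply (Projectivization.mk_eq_mk_iff' ℂ _ _ _ _).2
      refine ⟨1, ?_⟩
      rw [one_smul]
      exact congrArg ((R 1).subtype) (hNf a).symm
  have hcomp2 : ∀ p, mapθN (Projectivization.map F2.toLinearMap F2.injective p) = mapθMN p := by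
    intro p
    induction p using Projectivization.ind with
    | h a ha =>
      rw [Projectivization.map_mk, hmapθN, hmapθMN, Projectivization.map_mk,
        Projectivization.map_mk]
      apply (Projectivization.mk_eq_mk_iff' ℂ _ _ _ _).2
      refine ⟨1, ?_⟩
      rw [one_smul]
      exact (congrArg ((R 1).subtype) (hNfl2 a)).symm
  -- grid-derived correspondences
  have hα1 : ∀ p, mapι p ∈ Z 0 ↔ mapθN p ∈ Z 1 := by
    intro p
    constructor
    · intro hp
      obtain ⟨L, hL2, hptL, hz⟩ := gridRel hyp (show (0 : Fin 4) ≠ 3 by decide) hp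
      obtain ⟨q, hqZ, hqL, hqR⟩ := hz 1 (by decide) (by decide)
      obtain ⟨r, hrZ, hrL, hrR⟩ := hz 2 (by decide) (by decide)
      have hc := core_ab h01 (hyp.skew 2 0 (by decide)) (hyp.skew 2 1 (by decide)) N hNgraph
        hL2 p q r hjN hj2 hptL hqL hqR hrL hrR
      rwa [hc.1] at hqZ
    · intro hp
      obtain ⟨L, hL2, hptL, hz⟩ := gridRel hyp (show (1 : Fin 4) ≠ 3 by decide) hp
      obtain ⟨q0, hq0Z, hq0L, hq0R⟩ := hz 0 (by decide) (by decide)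
      obtain ⟨r, hrZ, hrL, hrR⟩ := hz 2 (by decide) (by decide)
      obtain ⟨p', hp'⟩ := exists_preimage hq0R
      have hc := core_ab h01 (hyp.skew 2 0 (by decide)) (hyp.skew 2 1 (by decide)) N hNgraph
        hL2 p' (mapθN p) r hjN hj2 (by rw [hp']; exact hq0L) hptL (hθN_le p) hrL hrR
      have hpp' : p = p' := Projectivization.map_injective _ hjN hc.1
      rw [hpp']
      rw [← hp'] at hq0Z
      exact hq0Z
  have hα2 : ∀ p, mapι p ∈ Z 0 ↔ mapθ2 p ∈ Z 2 := by
    intro p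
    constructor
    · intro hp
      obtain ⟨L, hL2, hptL, hz⟩ := gridRel hyp (show (0 : Fin 4) ≠ 3 by decide) hp
      obtain ⟨q, hqZ, hqL, hqR⟩ := hz 1 (by decide) (by decide)
      obtain ⟨r, hrZ, hrL, hrR⟩ := hz 2 (by decide) (by decide)
      have hc := core_ab h01 (hyp.skew 2 0 (by decide)) (hyp.skew 2 1 (by decide)) N hNgraph
        hL2 p q r hjN hj2 hptL hqL hqR hrL hrR
      rwa [hc.2] at hrZ
    · intro hp
      obtain ⟨L, hL2, hptL, hz⟩ := gridRel hyp (show (2 : Fin 4) ≠ 3 by decide) hp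
      obtain ⟨q0, hq0Z, hq0L, hq0R⟩ := hz 0 (by decide) (by decide)
      obtain ⟨q1, hq1Z, hq1L, hq1R⟩ := hz 1 (by decide) (by decide)
      obtain ⟨p', hp'⟩ := exists_preimage hq0R
      have hc := core_ab h01 (hyp.skew 2 0 (by decide)) (hyp.skew 2 1 (by decide)) N hNgraph
        hL2 p' q1 (mapθ2 p) hjN hj2 (by rw [hp']; exact hq0L) hq1L hq1R hptL (hθ2_le p)
      have hpp' : p = p' := Projectivization.map_injective _ hj2 hc.2
      rw [hpp']
      rw [← hp'] at hq0Z
      exact hq0Z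
  have hβ : ∀ p, mapι p ∈ Z 0 ↔ mapθM p ∈ Z 1 := by
    intro p
    constructor
    · intro hp
      obtain ⟨L, hL2, hptL, hz⟩ := gridRel hyp (show (0 : Fin 4) ≠ 2 by decide) hp
      obtain ⟨q, hqZ, hqL, hqR⟩ := hz 1 (by decide) (by decide)
      obtain ⟨r, hrZ, hrL, hrR⟩ := hz 3 (by decide) (by decide)
      have hc := core_ab h01 (hyp.skew 3 0 (by decide)) (hyp.skew 3 1 (by decide)) M hMgraph
        hL2 p q r hjM (j2_injective (hyp.skew 0 1 (by decide)) M) hptL hqL hqR hrL hrR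
      rwa [hc.1] at hqZ
    · intro hp
      obtain ⟨L, hL2, hptL, hz⟩ := gridRel hyp (show (1 : Fin 4) ≠ 2 by decide) hp
      obtain ⟨q0, hq0Z, hq0L, hq0R⟩ := hz 0 (by decide) (by decide)
      obtain ⟨r, hrZ, hrL, hrR⟩ := hz 3 (by decide) (by decide)
      obtain ⟨p', hp'⟩ := exists_preimage hq0R
      have hc := core_ab h01 (hyp.skew 3 0 (by decide)) (hyp.skew 3 1 (by decide)) M hMgraph
        hL2 p' (mapθM p) r hjM (j2_injective (hyp.skew 0 1 (by decide)) M)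
        (by rw [hp']; exact hq0L) hptL
        (map_le_of_range_le _ _ _ (fun a => (M a).2) p) hrL hrR
      have hpp' : p = p' := Projectivization.map_injective _ hjM hc.1
      rw [hpp']
      rw [← hp'] at hq0Z
      exact hq0Z
  have hγ : ∀ p, mapθ2 p ∈ Z 2 ↔ mapθMN p ∈ Z 1 := by
    intro p
    constructor
    · intro hp
      obtain ⟨L, hL2, hptL, hz⟩ := gridRel hyp (show (2 : Fin 4) ≠ 0 by decide) hp
      obtain ⟨q1, hq1Z, hq1L, hq1R⟩ := hz 1 (by decide) (by decide)
      obtain ⟨q3, hq3Z, hq3L, hq3R⟩ := hz 3 (by decide) (by decide)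
      have hc := core_c h01 (hyp.skew 2 1 (by decide)) (hyp.skew 3 0 (by decide))
        (hyp.skew 3 1 (by decide)) N M hNconv hMgraph hL2 p q1 q3 hj2 hjMN
        hptL hq1L hq1R hq3L hq3R
      rwa [hc] at hq1Z
    · intro hp
      obtain ⟨L, hL2, hptL, hz⟩ := gridRel hyp (show (1 : Fin 4) ≠ 0 by decide) hp
      obtain ⟨q2, hq2Z, hq2L, hq2R⟩ := hz 2 (by decide) (by decide)
      obtain ⟨q3, hq3Z, hq3L, hq3R⟩ := hz 3 (by decide) (by decide)
      obtain ⟨p', hp'⟩ := exists_preimage_graph h01 N hNgraph (hyp.skew 2 1 (by decide))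
        hj2 hq2R
      have hc := core_c h01 (hyp.skew 2 1 (by decide)) (hyp.skew 3 0 (by decide))
        (hyp.skew 3 1 (by decide)) N M hNconv hMgraph hL2 p' (mapθMN p) q3 hj2 hjMN
        (by rw [hp']; exact hq2L) hptL (hθMN_le p) hq3L hq3R
      have hpp' : p = p' := Projectivization.map_injective _ hjMN hc
      rw [hpp']
      rw [← hp'] at hq2Z
      exact hq2Z
  -- the invariant set
  set S : Set (ℙ ℂ (R 0)) := mapι ⁻¹' (Z 0) with hS
  have hiff_f : ∀ p, Projectivization.map f.toLinearMap f.injective p ∈ S ↔ p ∈ S := by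
    intro p
    show mapι _ ∈ Z 0 ↔ mapι p ∈ Z 0
    rw [hα1, hcomp1 p, hβ]
  have hiff_f2 : ∀ p, Projectivization.map F2.toLinearMap F2.injective p ∈ S ↔ p ∈ S := by
    intro p
    show mapι _ ∈ Z 0 ↔ mapι p ∈ Z 0
    rw [hα1, hcomp2 p, ← hγ, ← hα2]
  -- final assembly given a suitable linear automorphism
  have final : ∀ (F : (R 0) ≃ₗ[ℂ] (R 0)),
      (∀ p, Projectivization.map F.toLinearMap F.injective p ∈ S ↔ p ∈ S) →
      (¬ ∃ c : ℂ, F.toLinearMap = c • LinearMap.id) →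
      LinearMap.trace ℂ (R 0) F.toLinearMap ≠ 0 →
      ∃ (x : Fin 4) (f : (R x) ≃ₗ[ℂ] (R x)),
        (fun ψ ι =>
          ψ '' (ι ⁻¹' Z x) = ι ⁻¹' Z x ∧ ψ ≠ id ∧ ψ ∘ ψ ≠ id)
        (Projectivization.map f.toLinearMap f.injective)
        (Projectivization.map (R x).subtype (R x).injective_subtype) := by
    intro F hiff hns htr
    refine ⟨0, F, ?_, ?_, ?_⟩
    · -- image equality
      have hsurj : Function.Surjective (Projectivization.map F.toLinearMap F.injective) := by
        intro q
        refine ⟨Projectivization.map F.symm.toLinearMap F.symm.injective q, ?_⟩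
        induction q using Projectivization.ind with
        | h v hv =>
          rw [Projectivization.map_mk, Projectivization.map_mk]
          apply (Projectivization.mk_eq_mk_iff' ℂ _ _ _ _).2
          refine ⟨1, ?_⟩
          rw [one_smul]
          exact (F.apply_symm_apply v).symm
      apply Set.ext
      intro Q
      constructor
      · rintro ⟨p, hp, rfl⟩
        exact (hiff p).2 hp
      · intro hQ
        obtain ⟨p, rfl⟩ := hsurj Q
        exact ⟨p, (hiff p).1 hQ, rfl⟩
    · exact map_ne_id (hyp.finrank_eq 0) F.toLinearMap F.injective hns
    · intro hcontra
      have hcomp : Projectivization.map (F.toLinearMap ∘ₗ F.toLinearMap)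
          (F.injective.comp F.injective) = id := by
        rw [Projectivization.map_comp F.toLinearMap F.injective F.toLinearMap F.injective]
        exact hcontra
      exact map_ne_id (hyp.finrank_eq 0) (F.toLinearMap ∘ₗ F.toLinearMap)
        (F.injective.comp F.injective)
        (sq_nonscalar (hyp.finrank_eq 0) F.toLinearMap hns htr) hcomp
  -- the dichotomy
  by_cases hscal : ∃ c : ℂ, f.toLinearMap = c • LinearMap.id
  · -- scalar case: produce a quadric through all the points, contradiction
    exfalso
    obtain ⟨c, hc⟩ := hscal
    have hMN : ∀ a : (R 0), M a = c • N a := by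
      intro a
      rw [← hNf a]
      have hfa : f a = c • a := by
        have h' := congrArg (fun g : (R 0) →ₗ[ℂ] (R 0) => g a) hc
        simpa using h'
      rw [hfa, map_smul]
    obtain ⟨q, hq0, hqvan⟩ := quadric_case h01 (hyp.finrank_eq 0) N M Ne.symm.toLinearMap
      (fun a => Ne.symm_apply_apply a) hNgraph hMgraph c hMN
    apply hyp.no_quadric
    refine ⟨q, hq0, ?_⟩
    intro x p hp v hv
    have hvR : v ∈ R x := hyp.mem_line x p hp hv
    apply hqvan
    fin_cases x
    · exact Or.inl hvR
    · exact Or.inr (Or.inl hvR)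
    · exact Or.inr (Or.inr (Or.inl hvR))
    · exact Or.inr (Or.inr (Or.inr hvR))
  · by_cases htr : LinearMap.trace ℂ (R 0) f.toLinearMap = 0
    · -- use f - 1
      have hns2 : ¬ ∃ c : ℂ, F2.toLinearMap = c • LinearMap.id := by
        rintro ⟨c, hc⟩
        apply hscal
        refine ⟨c + 1, ?_⟩
        have hfl2c : fl2 = c • LinearMap.id := hc
        apply LinearMap.ext
        intro a
        have h1 : fl2 a = c • a := by rw [hfl2c]; rfl
        have h2 : fl2 a = f a - a := rfl
        have : f a = c • a + a := by rw [← h1, h2]; abel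
        rw [show f.toLinearMap a = f a from rfl, this]
        show c • a + a = (c + 1) • a
        rw [add_smul, one_smul]
      have htr2 : LinearMap.trace ℂ (R 0) F2.toLinearMap ≠ 0 := by
        have heq : LinearMap.trace ℂ (R 0) F2.toLinearMap
            = LinearMap.trace ℂ (R 0) f.toLinearMap
              - LinearMap.trace ℂ (R 0) (LinearMap.id : (R 0) →ₗ[ℂ] (R 0)) := by
          rw [← map_sub]
          rfl
        rw [heq, htr, LinearMap.trace_id, hyp.finrank_eq 0]
        norm_num
      exact final F2 hiff_f2 hns2 htr2
    · exact final f hiff_f hscal htr
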